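/- arXiv:2012.03436 — 2 statements merged into one kernel-verified Lean document; each statement's English description precedes it below -/
import Mathlib

section
/- Let d ≥ 2, let q = 1/m for a positive integer m, and set p₂ = 2q/(2 + qd − q). For nonnegative reals a_1, …, a_d with product λ, one has p₂·((2/q)·a_1^q + ∑_{j=2}^d a_j²) ≥ λ^{p₂}. -/
/-- Scalar inequality behind the asymmetric regularizer (Theorem 2(b)):
for `q = 1/m`, `p₂ = 2q/(2+qd−q)`, and nonnegative reals with product `lam`,
`p₂ * ((2/q) * a 0 ^ q + ∑_{j=1}^{d-1} (a j)²) ≥ lam ^ p₂`. -/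
theorem stmt_2 (m d : ℕ) (hm : 0 < m) (hd : 2 ≤ d) (q p₂ : ℝ)
    (hq : q = 1 / m) (hp : p₂ = 2 * q / (2 + q * d - q))
    (a : ℕ → ℝ) (ha : ∀ j, 0 ≤ a j)
    (lam : ℝ) (hlam : lam = ∏ j ∈ Finset.range d, a j) :
    lam ^ p₂ ≤ p₂ * ((2 / q) * a 0 ^ q + ∑ j ∈ Finset.Ico 1 d, a j ^ (2 : ℕ)) := by
  have hq0 : 0 < q := by
    rw [hq]; positivity
  have hdm : (1 : ℝ) ≤ (d : ℝ) := by exact_mod_cast (le_trans one_le_two (by exact_mod_cast hd))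
  have hD : 0 < 2 + q * d - q := by nlinarith
  have hp0 : 0 < p₂ := by rw [hp]; positivity
  set w : ℕ → ℝ := fun j => if j = 0 then p₂ / q else p₂ / 2 with hw
  set z : ℕ → ℝ := fun j => if j = 0 then a 0 ^ q else a j ^ (2 : ℕ) with hz
  have hwnn : ∀ i ∈ Finset.range d, 0 ≤ w i := by
    intro i _; simp only [hw]; split <;> positivity
  have hznn : ∀ i ∈ Finset.range d, 0 ≤ z i := by
    intro i _; simp only [hz]; split
    · exact Real.rpow_nonneg (ha 0) q
    · positivity
  have hd0 : 0 < d := lt_of_lt_of_le two_pos hd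
  have hsplit : Finset.range d = insert 0 (Finset.Ico 1 d) := by
    ext i; simp only [Finset.mem_range, Finset.mem_insert, Finset.mem_Ico]; omega
  have hnot : (0 : ℕ) ∉ Finset.Ico 1 d := by simp
  have hwsum : ∑ i ∈ Finset.range d, w i = 1 := by
    rw [hsplit, Finset.sum_insert hnot]
    have hstep : ∀ i ∈ Finset.Ico 1 d, w i = p₂ / 2 := by
      intro i hi
      simp only [hw]
      rw [if_neg]
      have := (Finset.mem_Ico.mp hi).1; omega
    rw [Finset.sum_congr rfl hstep, Finset.sum_const, Nat.card_Ico, nsmul_eq_mul]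
    have hcast : ((d - 1 : ℕ) : ℝ) = (d : ℝ) - 1 := by
      rw [Nat.cast_sub hd0, Nat.cast_one]
    rw [hcast]
    simp only [hw, if_pos rfl]
    rw [hp]
    field_simp
    ring
  have key := Real.geom_mean_le_arith_mean_weighted (Finset.range d) w z hwnn hwsum hznn
  have hprod : ∏ i ∈ Finset.range d, z i ^ w i = lam ^ p₂ := by
    rw [hlam, ← Real.finset_prod_rpow _ _ (fun i _ => ha i)]
    refine Finset.prod_congr rfl fun i _ => ?_
    simp only [hz, hw]
    by_cases h : i = 0
    · subst h
      rw [if_pos rfl, if_pos rfl, ← Real.rpow_mul (ha 0)]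
      congr 1
      field_simp
    · rw [if_neg h, if_neg h, ← Real.rpow_natCast (a i), ← Real.rpow_mul (ha i)]
      congr 1
      push_cast; ring
  rw [hprod] at key
  refine key.trans ?_
  rw [hsplit, Finset.sum_insert hnot]
  have h1 : w 0 * z 0 = p₂ / q * a 0 ^ q := by simp [hw, hz]
  have h2 : ∑ i ∈ Finset.Ico 1 d, w i * z i = p₂ / 2 * ∑ j ∈ Finset.Ico 1 d, a j ^ (2 : ℕ) := by
    rw [Finset.mul_sum]
    refine Finset.sum_congr rfl fun i hi => ?_
    simp only [hw, hz]
    rw [if_neg, if_neg] <;> first | rfl | (intro h; subst h; exact absurd hi hnot)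
  rw [h1, h2]
  have hs : 0 ≤ ∑ j ∈ Finset.Ico 1 d, a j ^ (2 : ℕ) :=
    Finset.sum_nonneg fun j _ => by positivity
  have haq : 0 ≤ a 0 ^ q := Real.rpow_nonneg (ha 0) q
  have hpq : 0 ≤ p₂ / q := by positivity
  calc p₂ / q * a 0 ^ q + p₂ / 2 * ∑ j ∈ Finset.Ico 1 d, a j ^ (2 : ℕ)
      ≤ 2 * (p₂ / q) * a 0 ^ q + p₂ * ∑ j ∈ Finset.Ico 1 d, a j ^ (2 : ℕ) := by
        nlinarith [mul_nonneg hpq haq, mul_nonneg hp0.le hs]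
    _ = p₂ * (2 / q * a 0 ^ q + ∑ j ∈ Finset.Ico 1 d, a j ^ (2 : ℕ)) := by ring
end

section
/- Let s ≤ N be positive integers, and let X₁, …, X_s be drawn uniformly without replacement from a finite population {x₁, …, x_N} ⊂ [a, b] with mean u. Then for every t > 0, P(|(1/s)·∑_{i=1}^s X_i − u| ≥ t) ≤ 2·exp(−2st²/((1 − (s−1)/N)·(b − a)²)). -/
open Finset

-- derivative helpers
lemma phi_deriv (p : ℝ) (hp0 : 0 ≤ p) (hp1 : p ≤ 1) (h : ℝ) :
    HasDerivAt (fun h => Real.log (1 - p + p * Real.exp h) - p * h)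
      (p * Real.exp h / (1 - p + p * Real.exp h) - p) h := by
  have hpos : 0 < 1 - p + p * Real.exp h := by
    rcases lt_or_eq_of_le hp1 with h1 | h1
    · have := Real.exp_pos h; nlinarith
    · subst h1; simpa using Real.exp_pos h
  have h1 : HasDerivAt (fun h => 1 - p + p * Real.exp h) (p * Real.exp h) h := by
    simpa using ((Real.hasDerivAt_exp h).const_mul p).const_add (1 - p)
  have h2 : HasDerivAt (fun h => Real.log (1 - p + p * Real.exp h))
      (p * Real.exp h / (1 - p + p * Real.exp h)) h := h1.log (ne_of_gt hpos)
  exact (h2.sub ((hasDerivAt_id h).const_mul p)).congr_deriv (by ring)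

lemma phi'_deriv (p : ℝ) (hp0 : 0 ≤ p) (hp1 : p ≤ 1) (h : ℝ) :
    HasDerivAt (fun h => p * Real.exp h / (1 - p + p * Real.exp h) - p)
      (p * Real.exp h * (1 - p) / (1 - p + p * Real.exp h) ^ 2) h := by
  have hpos : 0 < 1 - p + p * Real.exp h := by
    rcases lt_or_eq_of_le hp1 with h1 | h1
    · have := Real.exp_pos h; nlinarith
    · subst h1; simpa using Real.exp_pos h
  have h1 : HasDerivAt (fun h => 1 - p + p * Real.exp h) (p * Real.exp h) h := by
    simpa using ((Real.hasDerivAt_exp h).const_mul p).const_add (1 - p)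
  have h0 : HasDerivAt (fun h => p * Real.exp h) (p * Real.exp h) h :=
    (Real.hasDerivAt_exp h).const_mul p
  have h2 := (h0.div h1 (ne_of_gt hpos)).sub_const p
  exact h2.congr_deriv (by rw [div_left_inj' (pow_ne_zero 2 (ne_of_gt hpos))]; ring)

lemma dd_le (p : ℝ) (hp0 : 0 ≤ p) (hp1 : p ≤ 1) (h : ℝ) :
    p * Real.exp h * (1 - p) / (1 - p + p * Real.exp h) ^ 2 ≤ 1/4 := by
  have hpos : 0 < 1 - p + p * Real.exp h := by
    rcases lt_or_eq_of_le hp1 with h1 | h1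
    · have := Real.exp_pos h; nlinarith
    · subst h1; simpa using Real.exp_pos h
  rw [div_le_iff₀ (by positivity)]
  have he := Real.exp_pos h
  nlinarith [sq_nonneg (p * Real.exp h - (1 - p)), sq_nonneg (1 - p + p * Real.exp h)]

lemma key_scalar (p : ℝ) (hp0 : 0 ≤ p) (hp1 : p ≤ 1) (h : ℝ) :
    Real.log (1 - p + p * Real.exp h) ≤ p * h + h ^ 2 / 8 := by
  set φ : ℝ → ℝ := fun h => Real.log (1 - p + p * Real.exp h) - p * h with hφ
  set F : ℝ → ℝ := fun h => h ^ 2 / 8 - φ h with hF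
  set F' : ℝ → ℝ := fun h => 2 * h / 8 - (p * Real.exp h / (1 - p + p * Real.exp h) - p)
    with hF'
  have hFd : ∀ y, HasDerivAt F (F' y) y := by
    intro y
    have := ((hasDerivAt_pow 2 y).div_const 8).sub (phi_deriv p hp0 hp1 y)
    norm_num at this
    exact this
  have hF'd : ∀ y, HasDerivAt F'
      (2 / 8 - p * Real.exp y * (1 - p) / (1 - p + p * Real.exp y) ^ 2) y := by
    intro y
    have := (((hasDerivAt_id y).const_mul 2).div_const 8).sub (phi'_deriv p hp0 hp1 y)
    norm_num at this
    exact this.congr_deriv (by norm_num)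
  have hF'mono : Monotone F' := by
    apply monotone_of_deriv_nonneg (fun y => (hF'd y).differentiableAt)
    intro y
    rw [(hF'd y).deriv]
    have := dd_le p hp0 hp1 y
    linarith
  have hF'0 : F' 0 = 0 := by simp [hF']
  have hF0 : F 0 = 0 := by simp [hF, hφ]
  have key : 0 ≤ F h := by
    rcases le_total 0 h with hh | hh
    · have : MonotoneOn F (Set.Ici 0) := by
        apply monotoneOn_of_deriv_nonneg (convex_Ici 0)
          (Continuous.continuousOn
            (Differentiable.continuous (fun y => (hFd y).differentiableAt)))
          (fun y _ => ((hFd y).differentiableAt).differentiableWithinAt)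
        intro y hy
        rw [(hFd y).deriv]
        have : F' 0 ≤ F' y := hF'mono (le_of_lt (by simpa using hy))
        linarith [hF'0]
      have := this (Set.mem_Ici.2 le_rfl) (Set.mem_Ici.2 hh) hh
      linarith [hF0]
    · have : AntitoneOn F (Set.Iic 0) := by
        apply antitoneOn_of_deriv_nonpos (convex_Iic 0)
          (Continuous.continuousOn
            (Differentiable.continuous (fun y => (hFd y).differentiableAt)))
          (fun y _ => ((hFd y).differentiableAt).differentiableWithinAt)
        intro y hy
        rw [(hFd y).deriv]
        have : F' y ≤ F' 0 := hF'mono (le_of_lt (by simpa using hy))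
        linarith [hF'0]
      have := this (Set.mem_Iic.2 hh) (Set.mem_Iic.2 le_rfl) hh
      linarith [hF0]
  have : φ h ≤ h ^ 2 / 8 := by simpa [hF] using key
  simp only [hφ] at this
  linarith

/-- Hoeffding's lemma for the uniform distribution on a nonempty finite multiset. -/
lemma finHoeff {α : Type*} [DecidableEq α] (T : Finset α) (hT : T.Nonempty)
    (x : α → ℝ) (a b : ℝ) (hab : ∀ i ∈ T, a ≤ x i ∧ x i ≤ b) (c : ℝ) :
    ∑ j ∈ T, Real.exp (c * x j) ≤
      T.card * Real.exp (c * ((∑ j ∈ T, x j) / T.card) + c ^ 2 * (b - a) ^ 2 / 8) := by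
  set n : ℝ := (T.card : ℝ) with hn
  have hn0 : 0 < n := by rw [hn]; exact_mod_cast card_pos.2 hT
  set μ : ℝ := (∑ j ∈ T, x j) / T.card with hμ
  have hμa : a ≤ μ := by
    rw [hμ, le_div_iff₀ hn0]
    calc a * n = ∑ _j ∈ T, a := by rw [Finset.sum_const]; push_cast; ring
    _ ≤ ∑ j ∈ T, x j := Finset.sum_le_sum (fun j hj => (hab j hj).1)
  have hμb : μ ≤ b := by
    rw [hμ, div_le_iff₀ hn0]
    calc ∑ j ∈ T, x j ≤ ∑ _j ∈ T, b := Finset.sum_le_sum (fun j hj => (hab j hj).2)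
    _ = b * n := by rw [Finset.sum_const]; push_cast; ring
  rcases eq_or_lt_of_le (le_trans hμa hμb) with hba | hba
  · -- a = b : all values equal a
    have hx : ∀ j ∈ T, x j = a := fun j hj => le_antisymm
      (hba ▸ (hab j hj).2) (hab j hj).1
    have hμ' : μ = a := by
      rw [hμ]; rw [Finset.sum_congr rfl hx, Finset.sum_const]
      field_simp
      rw [nsmul_eq_mul]
    rw [Finset.sum_congr rfl (fun j hj => by rw [hx j hj])]
    rw [Finset.sum_const, hμ', ← hba]
    simp [nsmul_eq_mul, hn]
  · -- a < b
    set p : ℝ := (μ - a) / (b - a) with hp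
    have hba' : 0 < b - a := by linarith
    have hp0 : 0 ≤ p := div_nonneg (by linarith) (le_of_lt hba')
    have hp1 : p ≤ 1 := by rw [hp, div_le_one hba']; linarith
    -- pointwise convexity bound
    have hpt : ∀ j ∈ T, Real.exp (c * x j) ≤
        ((b - x j) / (b - a)) * Real.exp (c * a) + ((x j - a) / (b - a)) * Real.exp (c * b) := by
      intro j hj
      obtain ⟨h1, h2⟩ := hab j hj
      have hcx : c * x j = ((b - x j) / (b - a)) * (c * a) + ((x j - a) / (b - a)) * (c * b) := by
        field_simp; ring
      rw [hcx]
      exact convexOn_exp.2 (Set.mem_univ (c * a)) (Set.mem_univ (c * b))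
        (div_nonneg (by linarith) (le_of_lt hba')) (div_nonneg (by linarith) (le_of_lt hba'))
        (by field_simp; ring)
    have hsum : ∑ j ∈ T, Real.exp (c * x j) ≤
        n * ((1 - p) * Real.exp (c * a) + p * Real.exp (c * b)) := by
      calc ∑ j ∈ T, Real.exp (c * x j)
          ≤ ∑ j ∈ T, (((b - x j) / (b - a)) * Real.exp (c * a)
              + ((x j - a) / (b - a)) * Real.exp (c * b)) := Finset.sum_le_sum hpt
        _ = n * ((1 - p) * Real.exp (c * a) + p * Real.exp (c * b)) := by
            rw [Finset.sum_add_distrib, ← Finset.sum_mul, ← Finset.sum_mul]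
            have e1 : ∑ j ∈ T, (b - x j) / (b - a) = n * (1 - p) := by
              rw [← Finset.sum_div, Finset.sum_sub_distrib, Finset.sum_const]
              rw [hp, hμ]
              field_simp
              ring
            have e2 : ∑ j ∈ T, (x j - a) / (b - a) = n * p := by
              rw [← Finset.sum_div, Finset.sum_sub_distrib, Finset.sum_const]
              rw [hp, hμ]
              field_simp
              ring
            rw [e1, e2]; ring
    -- scalar bound
    have hker : (1 - p) * Real.exp (c * a) + p * Real.exp (c * b) ≤
        Real.exp (c * μ + c ^ 2 * (b - a) ^ 2 / 8) := by
      have h0 : (1 - p) * Real.exp (c * a) + p * Real.exp (c * b)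
          = Real.exp (c * a) * (1 - p + p * Real.exp (c * (b - a))) := by
        rw [show c * b = c * a + c * (b - a) by ring, Real.exp_add]
        ring
      rw [h0]
      have hposin : 0 < 1 - p + p * Real.exp (c * (b - a)) := by
        rcases lt_or_eq_of_le hp1 with h1 | h1
        · have := Real.exp_pos (c * (b - a)); nlinarith
        · rw [h1]; simpa using Real.exp_pos (c * (b - a))
      have := key_scalar p hp0 hp1 (c * (b - a))
      have hlog : 1 - p + p * Real.exp (c * (b - a)) ≤
          Real.exp (p * (c * (b - a)) + (c * (b - a)) ^ 2 / 8) := by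
        rw [← Real.exp_log hposin]
        exact Real.exp_le_exp.2 this
      calc Real.exp (c * a) * (1 - p + p * Real.exp (c * (b - a)))
          ≤ Real.exp (c * a) * Real.exp (p * (c * (b - a)) + (c * (b - a)) ^ 2 / 8) :=
            mul_le_mul_of_nonneg_left hlog (le_of_lt (Real.exp_pos _))
        _ = Real.exp (c * a + (p * (c * (b - a)) + (c * (b - a)) ^ 2 / 8)) :=
            (Real.exp_add _ _).symm
        _ = Real.exp (c * μ + c ^ 2 * (b - a) ^ 2 / 8) := by
            have hpm : p * (b - a) = μ - a := by rw [hp]; field_simp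
            congr 1
            linear_combination c * hpm
    calc ∑ j ∈ T, Real.exp (c * x j)
        ≤ n * ((1 - p) * Real.exp (c * a) + p * Real.exp (c * b)) := hsum
      _ ≤ n * Real.exp (c * μ + c ^ 2 * (b - a) ^ 2 / 8) := mul_le_mul_of_nonneg_left hker (le_of_lt hn0)

lemma snoc_inj {N k : ℕ} {g : Fin k → Fin N} (hg : Function.Injective g)
    {j : Fin N} (hj : ∀ i, g i ≠ j) : Function.Injective (Fin.snoc g j) := by
  intro a b hab
  induction a using Fin.lastCases with
  | last =>
    induction b using Fin.lastCases with
    | last => rfl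
    | cast b =>
      rw [Fin.snoc_last, Fin.snoc_castSucc] at hab
      exact absurd hab.symm (hj b)
  | cast a =>
    induction b using Fin.lastCases with
    | last =>
      rw [Fin.snoc_last, Fin.snoc_castSucc] at hab
      exact absurd hab (hj a)
    | cast b =>
      rw [Fin.snoc_castSucc, Fin.snoc_castSucc] at hab
      rw [hg hab]

lemma inj_step {N k : ℕ} {M : Type*} [AddCommMonoid M]
    (F : (Fin (k+1) → Fin N) → M) :
    ∑ f ∈ univ.filter (fun f : Fin (k+1) → Fin N => Function.Injective f), F f
    = ∑ g ∈ univ.filter (fun g : Fin k → Fin N => Function.Injective g),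
        ∑ j ∈ univ \ Finset.image g univ, F (Fin.snoc g j) := by
  symm
  rw [Finset.sum_sigma']
  apply Finset.sum_nbij' (j := fun f => (⟨Fin.init f, f (Fin.last k)⟩ :
      Σ _g : Fin k → Fin N, Fin N)) (i := fun p => Fin.snoc p.1 p.2)
  swap
  · intro f hf
    rw [Finset.mem_filter] at hf
    obtain ⟨-, hf⟩ := hf
    rw [Finset.mem_sigma]
    constructor
    · rw [Finset.mem_filter]
      exact ⟨Finset.mem_univ _, fun a b hab => by
        simpa using Fin.castSucc_injective k (hf hab)⟩
    · rw [Finset.mem_sdiff]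
      refine ⟨Finset.mem_univ _, ?_⟩
      rw [Finset.mem_image]
      rintro ⟨i, -, hi⟩
      have : Fin.castSucc i = Fin.last k := hf hi
      exact absurd this (Fin.castSucc_lt_last i).ne
  · intro p hp
    rw [Finset.mem_sigma, Finset.mem_filter, Finset.mem_sdiff] at hp
    obtain ⟨⟨-, hp1⟩, -, hp2⟩ := hp
    rw [Finset.mem_image] at hp2
    push_neg at hp2
    rw [Finset.mem_filter]
    exact ⟨Finset.mem_univ _, snoc_inj hp1 (fun i => hp2 i (Finset.mem_univ i))⟩
  · intro p _
    obtain ⟨g, j⟩ := p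
    simp only [Fin.init_snoc, Fin.snoc_last]
  · intro f _
    exact Fin.snoc_init_self f
  · intro p _
    rfl

lemma compl_card {N k : ℕ} {g : Fin k → Fin N} (hg : Function.Injective g) :
    (univ \ Finset.image g univ).card = N - k := by
  rw [Finset.card_sdiff_of_subset (Finset.subset_univ _), Finset.card_image_of_injective _ hg]
  simp

lemma compl_sum {N k : ℕ} {g : Fin k → Fin N} (hg : Function.Injective g) (x : Fin N → ℝ) :
    ∑ j ∈ univ \ Finset.image g univ, x j = (∑ i, x i) - ∑ i, x (g i) := by
  rw [Finset.sum_sdiff_eq_sub (Finset.subset_univ _),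
    Finset.sum_image (fun a _ b _ h => hg h)]

lemma inj_card (N k : ℕ) :
    (univ.filter (fun f : Fin (k+1) → Fin N => Function.Injective f)).card
    = (N - k) * (univ.filter (fun g : Fin k → Fin N => Function.Injective g)).card := by
  have := inj_step (N := N) (k := k) (M := ℕ) (fun _ => 1)
  simp only [Finset.sum_const, smul_eq_mul, mul_one] at this
  rw [this]
  rw [Finset.sum_congr rfl (fun g hg => compl_card (Finset.mem_filter.1 hg).2),
    Finset.sum_const, smul_eq_mul, mul_comm]

lemma sum_snoc {N k : ℕ} (x : Fin N → ℝ) (g : Fin k → Fin N) (j : Fin N) :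
    ∑ i, x ((Fin.snoc g j : Fin (k+1) → Fin N) i) = (∑ i, x (g i)) + x j := by
  rw [Fin.sum_univ_castSucc]
  simp [Fin.snoc_castSucc, Fin.snoc_last]

lemma main_claim (N : ℕ) (x : Fin N → ℝ) (a b u : ℝ) (hab : ∀ i, a ≤ x i ∧ x i ≤ b)
    (hu : (N : ℝ) * u = ∑ i, x i) :
    ∀ k, k < N → ∀ c : ℝ,
    ∑ f ∈ univ.filter (fun f : Fin k → Fin N => Function.Injective f),
        Real.exp (c * ∑ i, x (f i))
    ≤ ((univ.filter (fun f : Fin k → Fin N => Function.Injective f)).card : ℝ) *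
      Real.exp (c * k * u + (b - a) ^ 2 * c ^ 2 * ((N : ℝ) - k) ^ 2 / 8 *
        ∑ j ∈ Finset.range k, 1 / ((N : ℝ) - (j + 1)) ^ 2) := by
  intro k
  induction k with
  | zero =>
    intro _ c
    have hfilt : (univ.filter (fun f : Fin 0 → Fin N => Function.Injective f)) = univ :=
      Finset.filter_true_of_mem (fun f _ => fun a => a.elim0)
    rw [hfilt]
    simp
  | succ k ih =>
    intro hkN c
    have hk : k < N := Nat.lt_of_succ_lt hkN
    have hd1 : (1 : ℝ) ≤ (N : ℝ) - k := by
      have : (k : ℝ) + 1 ≤ N := by exact_mod_cast hk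
      linarith
    have hd2 : (1 : ℝ) ≤ (N : ℝ) - k - 1 := by
      have : (k : ℝ) + 2 ≤ N := by exact_mod_cast hkN
      linarith
    have hd0 : (0 : ℝ) < (N : ℝ) - k := by linarith
    have hcard : ((N : ℝ) - k) = ((N - k : ℕ) : ℝ) := by
      rw [Nat.cast_sub (le_of_lt hk)]
    set c' : ℝ := c * ((N : ℝ) - k - 1) / ((N : ℝ) - k) with hc'
    -- decompose
    push_cast
    rw [inj_step (fun f => Real.exp (c * ∑ i, x (f i)))]
    have step1 : ∀ g ∈ univ.filter (fun g : Fin k → Fin N => Function.Injective g),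
        ∑ j ∈ univ \ Finset.image g univ,
          Real.exp (c * ∑ i, x ((Fin.snoc g j : Fin (k+1) → Fin N) i))
        ≤ ((N : ℝ) - k) * Real.exp (c ^ 2 * (b - a) ^ 2 / 8 + c * N * u / ((N:ℝ) - k))
            * Real.exp (c' * ∑ i, x (g i)) := by
      intro g hg
      have hginj : Function.Injective g := (Finset.mem_filter.1 hg).2
      set T := univ \ Finset.image g univ with hT
      have hTcard : (T.card : ℝ) = (N : ℝ) - k := by
        rw [compl_card hginj, ← hcard]
      have hTne : T.Nonempty := by
        rw [← Finset.card_pos]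
        have : (0:ℝ) < T.card := by rw [hTcard]; linarith
        exact_mod_cast this
      have key := finHoeff T hTne x a b (fun i _ => hab i) c
      have hμ : (∑ j ∈ T, x j) / (T.card : ℝ)
          = ((N : ℝ) * u - ∑ i, x (g i)) / ((N : ℝ) - k) := by
        rw [hT, compl_sum hginj, hTcard, hu]
      calc ∑ j ∈ T, Real.exp (c * ∑ i, x ((Fin.snoc g j : Fin (k+1) → Fin N) i))
          = Real.exp (c * ∑ i, x (g i)) * ∑ j ∈ T, Real.exp (c * x j) := by
            rw [Finset.mul_sum]
            refine Finset.sum_congr rfl (fun j _ => ?_)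
            rw [sum_snoc, ← Real.exp_add]
            congr 1
            ring
        _ ≤ Real.exp (c * ∑ i, x (g i)) * ((T.card : ℝ) *
              Real.exp (c * ((∑ j ∈ T, x j) / (T.card : ℝ)) + c ^ 2 * (b - a) ^ 2 / 8)) :=
            mul_le_mul_of_nonneg_left key (le_of_lt (Real.exp_pos _))
        _ = ((N : ℝ) - k) * Real.exp (c ^ 2 * (b - a) ^ 2 / 8 + c * N * u / ((N:ℝ) - k))
            * Real.exp (c' * ∑ i, x (g i)) := by
            have hne : (N : ℝ) - k ≠ 0 := ne_of_gt hd0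
            rw [hμ, hTcard, mul_left_comm, ← Real.exp_add, mul_assoc, ← Real.exp_add]
            congr 1
            rw [hc']
            field_simp
            ring
    calc ∑ g ∈ univ.filter (fun g : Fin k → Fin N => Function.Injective g),
          ∑ j ∈ univ \ Finset.image g univ,
            Real.exp (c * ∑ i, x ((Fin.snoc g j : Fin (k+1) → Fin N) i))
        ≤ ∑ g ∈ univ.filter (fun g : Fin k → Fin N => Function.Injective g),
            ((N : ℝ) - k) * Real.exp (c ^ 2 * (b - a) ^ 2 / 8 + c * N * u / ((N:ℝ) - k))
            * Real.exp (c' * ∑ i, x (g i)) := Finset.sum_le_sum step1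
      _ = ((N : ℝ) - k) * Real.exp (c ^ 2 * (b - a) ^ 2 / 8 + c * N * u / ((N:ℝ) - k))
            * ∑ g ∈ univ.filter (fun g : Fin k → Fin N => Function.Injective g),
              Real.exp (c' * ∑ i, x (g i)) := by
            rw [Finset.mul_sum]
      _ ≤ ((N : ℝ) - k) * Real.exp (c ^ 2 * (b - a) ^ 2 / 8 + c * N * u / ((N:ℝ) - k))
            * (((univ.filter (fun f : Fin k → Fin N => Function.Injective f)).card : ℝ) *
              Real.exp (c' * k * u + (b - a) ^ 2 * c' ^ 2 * ((N : ℝ) - k) ^ 2 / 8 *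
                ∑ j ∈ Finset.range k, 1 / ((N : ℝ) - (j + 1)) ^ 2)) := by
            apply mul_le_mul_of_nonneg_left (ih hk c')
            positivity
      _ = ((univ.filter (fun f : Fin (k+1) → Fin N => Function.Injective f)).card : ℝ) *
          Real.exp (c * ((k:ℝ)+1) * u + (b - a) ^ 2 * c ^ 2 * ((N : ℝ) - ((k:ℝ)+1)) ^ 2 / 8 *
            ∑ j ∈ Finset.range (k+1), 1 / ((N : ℝ) - (j + 1)) ^ 2) := by
            have hne : (N : ℝ) - k ≠ 0 := ne_of_gt hd0
            have hne2 : (N : ℝ) - ((k:ℝ) + 1) ≠ 0 := by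
              intro h; rw [sub_eq_zero] at h; rw [h] at hd2; linarith
            rw [inj_card, Finset.sum_range_succ]
            push_cast [Nat.cast_sub (le_of_lt hk)]
            rw [mul_mul_mul_comm, ← Real.exp_add]
            congr 1
            rw [hc']
            congr 1
            generalize (∑ j ∈ Finset.range k, 1 / ((N : ℝ) - ((j:ℝ) + 1)) ^ 2) = S
            field_simp
            ring

lemma W_bound (N : ℕ) : ∀ s : ℕ, s < N →
    ∑ j ∈ Finset.range s, 1 / ((N : ℝ) - (j + 1)) ^ 2
      ≤ s * ((N : ℝ) - s + 1) / (N * ((N : ℝ) - s) ^ 2) := by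
  intro s
  induction s with
  | zero => intro _; simp
  | succ s ih =>
    intro hsN
    have hs : s < N := Nat.lt_of_succ_lt hsN
    have hN : (0:ℝ) < N := by
      have : 0 < N := by omega
      exact_mod_cast this
    have h1 : (1 : ℝ) ≤ (N : ℝ) - s := by
      have : (s:ℝ) + 1 ≤ N := by exact_mod_cast hs
      linarith
    have h2 : (1 : ℝ) ≤ (N : ℝ) - s - 1 := by
      have : (s:ℝ) + 2 ≤ N := by exact_mod_cast hsN
      linarith
    have hsn : (0:ℝ) ≤ s := Nat.cast_nonneg s
    rw [Finset.sum_range_succ]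
    have := ih hs
    push_cast
    have key : (s : ℝ) * ((N : ℝ) - s + 1) / (N * ((N : ℝ) - s) ^ 2)
        + 1 / ((N:ℝ) - (s + 1)) ^ 2
        ≤ ((s:ℝ) + 1) * ((N : ℝ) - (s+1) + 1) / (N * ((N : ℝ) - (s+1)) ^ 2) := by
      have p1 : (0:ℝ) < (N : ℝ) - s := by linarith
      have p2 : (0:ℝ) < (N : ℝ) - ((s:ℝ) + 1) := by linarith
      have q1 : (0:ℝ) < (N:ℝ) * ((N : ℝ) - s) ^ 2 := mul_pos hN (pow_pos p1 2)
      have q2 : (0:ℝ) < ((N:ℝ) - ((s:ℝ) + 1)) ^ 2 := pow_pos p2 2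
      have q3 : (0:ℝ) < (N:ℝ) * ((N : ℝ) - ((s:ℝ)+1)) ^ 2 := mul_pos hN q2
      rw [div_add_div _ _ (ne_of_gt q1) (ne_of_gt q2),
        div_le_div_iff₀ (mul_pos q1 q2) q3]
      nlinarith [mul_nonneg (mul_nonneg hN.le
        (pow_nonneg (by linarith : (0:ℝ) ≤ (N:ℝ) - (s:ℝ) - 1) 3)) hsn]
    calc ∑ j ∈ Finset.range s, 1 / ((N : ℝ) - (j + 1)) ^ 2 + 1 / ((N:ℝ) - ((s:ℝ) + 1)) ^ 2
        ≤ (s : ℝ) * ((N : ℝ) - s + 1) / (N * ((N : ℝ) - s) ^ 2)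
            + 1 / ((N:ℝ) - ((s:ℝ) + 1)) ^ 2 := by linarith [this]
      _ ≤ ((s:ℝ) + 1) * ((N : ℝ) - ((s:ℝ)+1) + 1) / (N * ((N : ℝ) - ((s:ℝ)+1)) ^ 2) := key

open Finset in
/-- Hoeffding inequality for sampling without replacement: drawing `s` samples
uniformly without replacement (an injective function `Fin s → Fin N` chosen
uniformly) from a population `x : Fin N → ℝ` lying in `[a, b]` with mean `u`,
the probability that the sample mean deviates from `u` by at least `t` is at most
`2·exp(−2st²/((1 − (s−1)/N)(b − a)²))`. -/
theorem stmt_16 (s N : ℕ) (hs : 0 < s) (hsN : s ≤ N)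
    (x : Fin N → ℝ) (a b u : ℝ)
    (hab : ∀ i, a ≤ x i ∧ x i ≤ b)
    (hu : u = (1 / N) * ∑ i, x i)
    (t : ℝ) (ht : 0 < t) :
    (((univ.filter (fun f : Fin s → Fin N => Function.Injective f ∧
          t ≤ |(1 / s) * (∑ i, x (f i)) - u|)).card : ℝ)) /
        ((univ.filter (fun f : Fin s → Fin N => Function.Injective f)).card : ℝ) ≤
      2 * Real.exp (-(2 * s * t ^ 2) /
        ((1 - ((s : ℝ) - 1) / N) * (b - a) ^ 2)) := by
  have hN : 0 < N := lt_of_lt_of_le hs hsN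
  have hNR : (0:ℝ) < N := by exact_mod_cast hN
  have hsR : (0:ℝ) < s := by exact_mod_cast hs
  have hu' : (N : ℝ) * u = ∑ i, x i := by rw [hu]; field_simp
  have hRpos : 0 < 2 * Real.exp (-(2 * s * t ^ 2) /
      ((1 - ((s : ℝ) - 1) / N) * (b - a) ^ 2)) := by positivity
  -- degenerate cases: numerator is empty
  have degenerate : ∀ (hdeg : ∀ f : Fin s → Fin N, Function.Injective f →
      (1 / (s:ℝ)) * (∑ i, x (f i)) - u = 0),
      (((univ.filter (fun f : Fin s → Fin N => Function.Injective f ∧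
          t ≤ |(1 / s) * (∑ i, x (f i)) - u|)).card : ℝ)) /
        ((univ.filter (fun f : Fin s → Fin N => Function.Injective f)).card : ℝ) ≤
      2 * Real.exp (-(2 * s * t ^ 2) /
        ((1 - ((s : ℝ) - 1) / N) * (b - a) ^ 2)) := by
    intro hdeg
    have : (univ.filter (fun f : Fin s → Fin N => Function.Injective f ∧
        t ≤ |(1 / s) * (∑ i, x (f i)) - u|)) = ∅ := by
      rw [Finset.filter_eq_empty_iff]
      rintro f - ⟨hf1, hf2⟩
      rw [hdeg f hf1] at hf2
      simp at hf2
      linarith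
    rw [this]
    simp only [Finset.card_empty, Nat.cast_zero, zero_div]
    linarith
  have hab0 : a ≤ b := le_trans (hab ⟨0, hN⟩).1 (hab ⟨0, hN⟩).2
  rcases eq_or_lt_of_le hab0 with hba | hba
  · -- a = b
    apply degenerate
    intro f hf
    have hx : ∀ i, x i = a := fun i => le_antisymm (hba ▸ (hab i).2) (hab i).1
    have h1 : ∑ i, x (f i) = s * a := by
      rw [Finset.sum_congr rfl (fun i _ => hx (f i))]
      simp [mul_comm]
    have h2 : u = a := by
      have : ∑ i, x i = N * a := by
        rw [Finset.sum_congr rfl (fun i _ => hx i)]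
        simp [mul_comm]
      rw [hu, this]
      field_simp
    rw [h1, h2]
    field_simp
    simp
  rcases eq_or_lt_of_le hsN with hseq | hslt
  · -- s = N
    apply degenerate
    intro f hf
    have hbij : Function.Bijective f := by
      rw [Fintype.bijective_iff_injective_and_card]
      exact ⟨hf, by simp [hseq]⟩
    have h1 : ∑ i, x (f i) = ∑ i, x i :=
      Fintype.sum_bijective f hbij _ _ (fun i => rfl)
    rw [h1, ← hu', hseq]
    field_simp
    simp
  -- main case : a < b, s < N
  set V : ℝ := 1 - ((s : ℝ) - 1) / N with hV
  have hVeq : V = ((N : ℝ) - s + 1) / N := by rw [hV]; field_simp; ring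
  have hsltR : (s : ℝ) ≤ (N:ℝ) - 1 := by
    have : (s:ℝ) + 1 ≤ N := by exact_mod_cast hslt
    linarith
  have hVpos : 0 < V := by rw [hVeq]; apply div_pos; linarith; exact hNR
  have hbapos : 0 < (b - a) ^ 2 := pow_pos (sub_pos.2 hba) 2
  set lam : ℝ := 4 * t / (V * (b - a) ^ 2) with hlam
  have hlampos : 0 < lam := div_pos (by linarith) (mul_pos hVpos hbapos)
  set D : ℝ := ((univ.filter (fun f : Fin s → Fin N => Function.Injective f)).card : ℝ)
    with hD
  have hDpos : 0 < D := by
    rw [hD]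
    have : (univ.filter (fun f : Fin s → Fin N => Function.Injective f)).Nonempty :=
      ⟨Fin.castLE hsN, Finset.mem_filter.2 ⟨Finset.mem_univ _, Fin.castLE_injective hsN⟩⟩
    exact_mod_cast Finset.card_pos.2 this
  -- the mgf bound specialized
  have mgf : ∀ c : ℝ,
      ∑ f ∈ univ.filter (fun f : Fin s → Fin N => Function.Injective f),
        Real.exp (c * ∑ i, x (f i))
      ≤ D * Real.exp (c * s * u + (b - a) ^ 2 * c ^ 2 * s * V / 8) := by
    intro c
    refine le_trans (main_claim N x a b u hab hu' s hslt c) ?_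
    rw [← hD]
    apply mul_le_mul_of_nonneg_left _ (le_of_lt hDpos)
    apply Real.exp_le_exp.2
    have hcoef : (0:ℝ) ≤ (b - a) ^ 2 * c ^ 2 * ((N : ℝ) - s) ^ 2 / 8 := by positivity
    have hW := W_bound N s hslt
    have : (b - a) ^ 2 * c ^ 2 * ((N : ℝ) - s) ^ 2 / 8 *
          ∑ j ∈ Finset.range s, 1 / ((N : ℝ) - (j + 1)) ^ 2
        ≤ (b - a) ^ 2 * c ^ 2 * ((N : ℝ) - s) ^ 2 / 8 *
          ((s:ℝ) * ((N : ℝ) - s + 1) / (N * ((N : ℝ) - s) ^ 2)) :=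
      mul_le_mul_of_nonneg_left hW hcoef
    have heq : (b - a) ^ 2 * c ^ 2 * ((N : ℝ) - s) ^ 2 / 8 *
          ((s:ℝ) * ((N : ℝ) - s + 1) / (N * ((N : ℝ) - s) ^ 2))
        = (b - a) ^ 2 * c ^ 2 * s * V / 8 := by
      rw [hVeq]
      have hNs : ((N:ℝ) - s) ≠ 0 := by intro h; rw [sub_eq_zero] at h; linarith
      field_simp
    linarith [this, heq.symm.le]
  have hVne : V ≠ 0 := ne_of_gt hVpos
  have hbane : b - a ≠ 0 := ne_of_gt (sub_pos.2 hba)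
  clear_value V
  have hexpS : (b - a) ^ 2 * lam ^ 2 * s * V / 8 - lam * s * t
      = -(2 * s * t ^ 2) / (V * (b - a) ^ 2) := by
    rw [hlam]
    field_simp
    ring
  clear_value lam
  have tailA : (((univ.filter (fun f : Fin s → Fin N => Function.Injective f ∧
      t ≤ (1 / (s:ℝ)) * (∑ i, x (f i)) - u)).card : ℝ))
      ≤ D * Real.exp (-(2 * s * t ^ 2) / (V * (b - a) ^ 2)) := by
    set A := univ.filter (fun f : Fin s → Fin N => Function.Injective f ∧
      t ≤ (1 / (s:ℝ)) * (∑ i, x (f i)) - u) with hA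
    have h1 : (A.card : ℝ) * Real.exp (lam * (s * (u + t)))
        ≤ ∑ f ∈ A, Real.exp (lam * ∑ i, x (f i)) := by
      have := Finset.card_nsmul_le_sum A (fun f => Real.exp (lam * ∑ i, x (f i)))
        (Real.exp (lam * (s * (u + t)))) ?_
      · simpa [nsmul_eq_mul] using this
      · intro f hf
        obtain ⟨-, -, hf2⟩ := Finset.mem_filter.1 hf
        apply Real.exp_le_exp.2
        apply mul_le_mul_of_nonneg_left _ (le_of_lt hlampos)
        calc (s:ℝ) * (u + t) = s * (t + u) := by ring
          _ ≤ s * ((1 / (s:ℝ)) * (∑ i, x (f i)) - u + u) := by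
              apply mul_le_mul_of_nonneg_left _ (le_of_lt hsR)
              linarith [hf2]
          _ = ∑ i, x (f i) := by field_simp; ring
    have h2 : ∑ f ∈ A, Real.exp (lam * ∑ i, x (f i))
        ≤ ∑ f ∈ univ.filter (fun f : Fin s → Fin N => Function.Injective f),
            Real.exp (lam * ∑ i, x (f i)) := by
      apply Finset.sum_le_sum_of_subset_of_nonneg
      · intro f hf; rw [Finset.mem_filter] at hf ⊢; exact ⟨hf.1, hf.2.1⟩
      · intro f _ _
        exact le_of_lt (Real.exp_pos _)
    have h3 := mgf lam
    have h4 : (A.card : ℝ) * Real.exp (lam * (s * (u + t)))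
        ≤ D * Real.exp (lam * s * u + (b - a) ^ 2 * lam ^ 2 * s * V / 8) := by
      linarith
    have h5 : (A.card : ℝ) ≤ D * Real.exp (lam * s * u + (b - a) ^ 2 * lam ^ 2 * s * V / 8
        - lam * (s * (u + t))) := by
      rw [Real.exp_sub, ← mul_div_assoc, le_div_iff₀ (Real.exp_pos _)]
      exact h4
    have hexp : lam * s * u + (b - a) ^ 2 * lam ^ 2 * s * V / 8 - lam * (s * (u + t))
        = -(2 * s * t ^ 2) / (V * (b - a) ^ 2) := by
      rw [← hexpS]; ring
    rw [hexp] at h5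
    exact h5
  have tailB : (((univ.filter (fun f : Fin s → Fin N => Function.Injective f ∧
      t ≤ -((1 / (s:ℝ)) * (∑ i, x (f i)) - u))).card : ℝ))
      ≤ D * Real.exp (-(2 * s * t ^ 2) / (V * (b - a) ^ 2)) := by
    set B := univ.filter (fun f : Fin s → Fin N => Function.Injective f ∧
      t ≤ -((1 / (s:ℝ)) * (∑ i, x (f i)) - u)) with hB
    have h1 : (B.card : ℝ) * Real.exp (-lam * (s * (u - t)))
        ≤ ∑ f ∈ B, Real.exp (-lam * ∑ i, x (f i)) := by
      have := Finset.card_nsmul_le_sum B (fun f => Real.exp (-lam * ∑ i, x (f i)))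
        (Real.exp (-lam * (s * (u - t)))) ?_
      · simpa [nsmul_eq_mul] using this
      · intro f hf
        obtain ⟨-, -, hf2⟩ := Finset.mem_filter.1 hf
        apply Real.exp_le_exp.2
        have hsum : ∑ i, x (f i) ≤ s * (u - t) := by
          have : (1 / (s:ℝ)) * (∑ i, x (f i)) ≤ u - t := by linarith
          calc ∑ i, x (f i) = s * ((1 / (s:ℝ)) * (∑ i, x (f i))) := by field_simp
            _ ≤ s * (u - t) := mul_le_mul_of_nonneg_left this (le_of_lt hsR)
        have := mul_le_mul_of_nonneg_left hsum (le_of_lt hlampos)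
        linarith
    have h2 : ∑ f ∈ B, Real.exp (-lam * ∑ i, x (f i))
        ≤ ∑ f ∈ univ.filter (fun f : Fin s → Fin N => Function.Injective f),
            Real.exp (-lam * ∑ i, x (f i)) := by
      apply Finset.sum_le_sum_of_subset_of_nonneg
      · intro f hf; rw [Finset.mem_filter] at hf ⊢; exact ⟨hf.1, hf.2.1⟩
      · intro f _ _
        exact le_of_lt (Real.exp_pos _)
    have h3 := mgf (-lam)
    have h4 : (B.card : ℝ) * Real.exp (-lam * (s * (u - t)))
        ≤ D * Real.exp (-lam * s * u + (b - a) ^ 2 * (-lam) ^ 2 * s * V / 8) := by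
      calc (B.card : ℝ) * Real.exp (-lam * (s * (u - t)))
          ≤ ∑ f ∈ B, Real.exp (-lam * ∑ i, x (f i)) := h1
        _ ≤ ∑ f ∈ univ.filter (fun f : Fin s → Fin N => Function.Injective f),
            Real.exp (-lam * ∑ i, x (f i)) := h2
        _ ≤ D * Real.exp (-lam * s * u + (b - a) ^ 2 * (-lam) ^ 2 * s * V / 8) := h3
    have h5 : (B.card : ℝ) ≤ D * Real.exp (-lam * s * u
        + (b - a) ^ 2 * (-lam) ^ 2 * s * V / 8 - -lam * (s * (u - t))) := by
      rw [Real.exp_sub, ← mul_div_assoc, le_div_iff₀ (Real.exp_pos _)]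
      exact h4
    have hexp : -lam * s * u + (b - a) ^ 2 * (-lam) ^ 2 * s * V / 8 - -lam * (s * (u - t))
        = -(2 * s * t ^ 2) / (V * (b - a) ^ 2) := by
      rw [← hexpS]; ring
    rw [hexp] at h5
    exact h5
  -- combine
  have hsplit : (univ.filter (fun f : Fin s → Fin N => Function.Injective f ∧
        t ≤ |(1 / s) * (∑ i, x (f i)) - u|))
      ⊆ (univ.filter (fun f : Fin s → Fin N => Function.Injective f ∧
          t ≤ (1 / (s:ℝ)) * (∑ i, x (f i)) - u))
        ∪ (univ.filter (fun f : Fin s → Fin N => Function.Injective f ∧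
          t ≤ -((1 / (s:ℝ)) * (∑ i, x (f i)) - u))) := by
    intro f hf
    obtain ⟨h0, h1, h2⟩ := Finset.mem_filter.1 hf
    rw [Finset.mem_union, Finset.mem_filter, Finset.mem_filter]
    rcases le_abs.1 h2 with h | h
    · exact Or.inl ⟨h0, h1, h⟩
    · exact Or.inr ⟨h0, h1, h⟩
  have hcards : (((univ.filter (fun f : Fin s → Fin N => Function.Injective f ∧
        t ≤ |(1 / s) * (∑ i, x (f i)) - u|)).card : ℝ))
      ≤ 2 * (D * Real.exp (-(2 * s * t ^ 2) / (V * (b - a) ^ 2))) := by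
    have hc1 := Finset.card_le_card hsplit
    have hc2 := Finset.card_union_le
      (univ.filter (fun f : Fin s → Fin N => Function.Injective f ∧
          t ≤ (1 / (s:ℝ)) * (∑ i, x (f i)) - u))
      (univ.filter (fun f : Fin s → Fin N => Function.Injective f ∧
          t ≤ -((1 / (s:ℝ)) * (∑ i, x (f i)) - u)))
    have : (((univ.filter (fun f : Fin s → Fin N => Function.Injective f ∧
        t ≤ |(1 / s) * (∑ i, x (f i)) - u|)).card : ℝ))
        ≤ (((univ.filter (fun f : Fin s → Fin N => Function.Injective f ∧
          t ≤ (1 / (s:ℝ)) * (∑ i, x (f i)) - u)).card : ℝ))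
        + (((univ.filter (fun f : Fin s → Fin N => Function.Injective f ∧
          t ≤ -((1 / (s:ℝ)) * (∑ i, x (f i)) - u))).card : ℝ)) := by
      exact_mod_cast le_trans hc1 hc2
    linarith
  rw [div_le_iff₀ hDpos]
  calc (((univ.filter (fun f : Fin s → Fin N => Function.Injective f ∧
        t ≤ |(1 / s) * (∑ i, x (f i)) - u|)).card : ℝ))
      ≤ 2 * (D * Real.exp (-(2 * s * t ^ 2) / (V * (b - a) ^ 2))) := hcards
    _ = 2 * Real.exp (-(2 * s * t ^ 2) / (V * (b - a) ^ 2)) * D := by ring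
end
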